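/- Suppose a_ℓ ≤ (2ℓ/√M)·Σ_{t=1}^{⌊ℓ/2⌋} a_t·a_{ℓ−t} + s_ℓ for all ℓ ≥ 2, where a₁ ≤ M/D² and s_ℓ ≤ M·(c log M)^{ℓ−1}/D^{ℓ+1} with D ≥ √M ≥ 2, c ≥ 1, log M ≥ 1. Then a_ℓ ≤ C_ℓ · M·(c log M)^{ℓ−1}/D^{ℓ+1} for all ℓ ≥ 1, where C_ℓ depends only on ℓ. -/

import Mathlib

open scoped BigOperators

noncomputable def Cfun : ℕ → ℝ
  | n =>
    if h : n ≤ 1 then 1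
    else 2 * n * (∑ t ∈ (Finset.Icc 1 (n / 2)).attach, Cfun t.1 * Cfun (n - t.1)) + 1
termination_by n => n
decreasing_by
  · have := Finset.mem_Icc.mp t.2; omega
  · have := Finset.mem_Icc.mp t.2; omega

lemma Cfun_pos : ∀ n, 0 < Cfun n := by
  intro n
  induction n using Nat.strong_induction_on with
  | _ n ih =>
    rw [Cfun]
    split
    · norm_num
    · rename_i h
      have hsum : 0 ≤ ∑ t ∈ (Finset.Icc 1 (n / 2)).attach, Cfun t.1 * Cfun (n - t.1) := by
        apply Finset.sum_nonneg
        intro t _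
        have ht := Finset.mem_Icc.mp t.2
        exact le_of_lt (mul_pos (ih _ (by omega)) (ih _ (by omega)))
      have : (0:ℝ) ≤ 2 * n * ∑ t ∈ (Finset.Icc 1 (n / 2)).attach, Cfun t.1 * Cfun (n - t.1) := by
        positivity
      linarith

/-- Abstract form of the inductive trace-moment recursion: if
`a_ℓ ≤ (2ℓ/√M)·Σ_{t=1}^{⌊ℓ/2⌋} a_t a_{ℓ−t} + s_ℓ` for `ℓ ≥ 2`, with `a₁ ≤ M/D²` and
`s_ℓ ≤ M (c log M)^{ℓ−1}/D^{ℓ+1}`, where `D ≥ √M ≥ 2`, `c ≥ 1`, `log M ≥ 1`, then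
`a_ℓ ≤ C_ℓ · M (c log M)^{ℓ−1}/D^{ℓ+1}` with `C_ℓ` depending only on `ℓ`. -/
theorem trace_moment_recursion :
    ∃ C : ℕ → ℝ, (∀ ℓ, 0 < C ℓ) ∧
      ∀ (M D c : ℝ) (a s : ℕ → ℝ),
        2 ≤ Real.sqrt M → Real.sqrt M ≤ D → 1 ≤ c → 1 ≤ Real.log M →
        (∀ ℓ, 0 ≤ a ℓ) →
        a 1 ≤ M / D ^ 2 →
        (∀ ℓ : ℕ, 2 ≤ ℓ → s ℓ ≤ M * (c * Real.log M) ^ (ℓ - 1) / D ^ (ℓ + 1)) →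
        (∀ ℓ : ℕ, 2 ≤ ℓ →
          a ℓ ≤ (2 * ℓ / Real.sqrt M) * ∑ t ∈ Finset.Icc 1 (ℓ / 2), a t * a (ℓ - t) + s ℓ) →
        ∀ ℓ : ℕ, 1 ≤ ℓ → a ℓ ≤ C ℓ * M * (c * Real.log M) ^ (ℓ - 1) / D ^ (ℓ + 1) := by
  refine ⟨Cfun, Cfun_pos, ?_⟩
  intro M D c a s hM2 hMD hc hlog ha ha1 hs hrec
  have hsq0 : (0:ℝ) < Real.sqrt M := by linarith
  have hMpos : 0 < M := Real.sqrt_pos.mp hsq0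
  have hD0 : (0:ℝ) < D := by linarith
  have hsq : Real.sqrt M * Real.sqrt M = M := Real.mul_self_sqrt hMpos.le
  set X := c * Real.log M with hXdef
  have hX : 1 ≤ X := by nlinarith
  intro ℓ
  induction ℓ using Nat.strong_induction_on with
  | _ ℓ ih =>
    intro hℓ1
    rcases eq_or_lt_of_le hℓ1 with h1 | h2
    · -- ℓ = 1
      subst h1
      have : Cfun 1 = 1 := by rw [Cfun]; norm_num
      rw [this]
      simpa using ha1
    · -- ℓ ≥ 2
      have hℓ2 : 2 ≤ ℓ := h2
      set S := ∑ t ∈ Finset.Icc 1 (ℓ / 2), Cfun t * Cfun (ℓ - t) with hS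
      have hS0 : 0 ≤ S := Finset.sum_nonneg fun t _ =>
        le_of_lt (mul_pos (Cfun_pos _) (Cfun_pos _))
      have key : ∀ t ∈ Finset.Icc 1 (ℓ / 2),
          a t * a (ℓ - t) ≤ Cfun t * Cfun (ℓ - t) * (M ^ 2 * X ^ (ℓ - 2) / D ^ (ℓ + 2)) := by
        intro t htmem
        have ht := Finset.mem_Icc.mp htmem
        have h1 : a t ≤ Cfun t * M * X ^ (t - 1) / D ^ (t + 1) := ih t (by omega) (by omega)
        have h2' : a (ℓ - t) ≤ Cfun (ℓ - t) * M * X ^ (ℓ - t - 1) / D ^ (ℓ - t + 1) :=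
          ih (ℓ - t) (by omega) (by omega)
        have hle : a t * a (ℓ - t) ≤
            (Cfun t * M * X ^ (t - 1) / D ^ (t + 1)) *
            (Cfun (ℓ - t) * M * X ^ (ℓ - t - 1) / D ^ (ℓ - t + 1)) := by
          apply mul_le_mul h1 h2' (ha _)
          exact div_nonneg (mul_nonneg (mul_nonneg (Cfun_pos t).le hMpos.le)
            (by positivity)) (by positivity)
        refine hle.trans_eq ?_
        have e1 : (t - 1) + (ℓ - t - 1) = ℓ - 2 := by omega
        have e2 : (t + 1) + (ℓ - t + 1) = ℓ + 2 := by omega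
        have ex : X ^ (t - 1) * X ^ (ℓ - t - 1) = X ^ (ℓ - 2) := by rw [← pow_add, e1]
        have ed : D ^ (t + 1) * D ^ (ℓ - t + 1) = D ^ (ℓ + 2) := by rw [← pow_add, e2]
        rw [div_mul_div_comm, ed, ← ex]
        ring
      have hsum : ∑ t ∈ Finset.Icc 1 (ℓ / 2), a t * a (ℓ - t) ≤
          S * (M ^ 2 * X ^ (ℓ - 2) / D ^ (ℓ + 2)) := by
        rw [hS, Finset.sum_mul]
        exact Finset.sum_le_sum key
      have hstep := hrec ℓ hℓ2
      have hsℓ := hs ℓ hℓ2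
      have hcoef : (0:ℝ) ≤ 2 * ℓ / Real.sqrt M := by positivity
      have hA : (2 * (ℓ:ℝ) / Real.sqrt M) * (S * (M ^ 2 * X ^ (ℓ - 2) / D ^ (ℓ + 2))) ≤
          (2 * ℓ * S) * (M * X ^ (ℓ - 1) / D ^ (ℓ + 1)) := by
        have hXpow : X ^ (ℓ - 2) ≤ X ^ (ℓ - 1) := pow_le_pow_right₀ hX (by omega)
        have hXpow0 : (0:ℝ) ≤ X ^ (ℓ - 2) := by positivity
        have hXpow1 : (0:ℝ) ≤ X ^ (ℓ - 1) := by positivity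
        have hDp : (0:ℝ) < D ^ (ℓ + 1) := by positivity
        have hcore : M ^ 2 * X ^ (ℓ - 2) / D ^ (ℓ + 2) / Real.sqrt M ≤
            M * X ^ (ℓ - 1) / D ^ (ℓ + 1) := by
          rw [div_div, div_le_div_iff₀ (by positivity) hDp]
          have : D ^ (ℓ + 2) = D ^ (ℓ + 1) * D := pow_succ D (ℓ + 1)
          rw [this]
          have hM2' : M ^ 2 ≤ M * (Real.sqrt M * D) := by
            have h' : M * Real.sqrt M * Real.sqrt M ≤ M * Real.sqrt M * D :=
              mul_le_mul_of_nonneg_left hMD (by positivity)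
            have hEq : M ^ 2 = M * Real.sqrt M * Real.sqrt M := by
              rw [mul_assoc, hsq]; ring
            linarith
          have hXp : M ^ 2 * X ^ (ℓ - 2) ≤ M * (Real.sqrt M * D) * X ^ (ℓ - 1) := by
            have := mul_le_mul hM2' hXpow hXpow0 (by positivity)
            linarith
          nlinarith [mul_le_mul_of_nonneg_right hXp hDp.le]
        calc (2 * (ℓ:ℝ) / Real.sqrt M) * (S * (M ^ 2 * X ^ (ℓ - 2) / D ^ (ℓ + 2)))
            = (2 * ℓ * S) * (M ^ 2 * X ^ (ℓ - 2) / D ^ (ℓ + 2) / Real.sqrt M) := by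
              field_simp
          _ ≤ (2 * ℓ * S) * (M * X ^ (ℓ - 1) / D ^ (ℓ + 1)) := by
              apply mul_le_mul_of_nonneg_left hcore
              positivity
      have hCℓ : Cfun ℓ = 2 * ℓ * S + 1 := by
        rw [Cfun, dif_neg (by omega : ¬ ℓ ≤ 1)]
        congr 1
        congr 1
        rw [hS]
        exact Finset.sum_attach _ (fun t => Cfun t * Cfun (ℓ - t))
      have : a ℓ ≤ (2 * ℓ * S) * (M * X ^ (ℓ - 1) / D ^ (ℓ + 1)) + M * X ^ (ℓ - 1) / D ^ (ℓ + 1) := by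
        calc a ℓ ≤ (2 * ℓ / Real.sqrt M) * ∑ t ∈ Finset.Icc 1 (ℓ / 2), a t * a (ℓ - t) + s ℓ :=
              hstep
          _ ≤ (2 * ℓ / Real.sqrt M) * (S * (M ^ 2 * X ^ (ℓ - 2) / D ^ (ℓ + 2))) + s ℓ := by
              have := mul_le_mul_of_nonneg_left hsum hcoef
              linarith
          _ ≤ (2 * ℓ * S) * (M * X ^ (ℓ - 1) / D ^ (ℓ + 1)) + M * X ^ (ℓ - 1) / D ^ (ℓ + 1) := by
              linarith
      rw [hCℓ]
      calc a ℓ ≤ (2 * ℓ * S) * (M * X ^ (ℓ - 1) / D ^ (ℓ + 1)) + M * X ^ (ℓ - 1) / D ^ (ℓ + 1) :=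
            this
        _ = (2 * ℓ * S + 1) * M * X ^ (ℓ - 1) / D ^ (ℓ + 1) := by ring
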